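/- arXiv:math/0410198 — 2 statements merged into one kernel-verified Lean document; each statement's English description precedes it below -/
import Mathlib

section
/- In an ω-residually free group, if two nontrivial commuting elements are conjugate then they are equal: if a, b ∈ L are nontrivial, ab = ba, and b = g a g⁻¹ for some g ∈ L, then a = b. -/
set_option linter.unusedSectionVars false
namespace FGWork
open FreeGroup List
variable {α : Type} [DecidableEq α]



/-- no cancellation between adjacent letters -/
def Rc (p q : α × Bool) : Prop := ¬(p.1 = q.1 ∧ p.2 = !q.2)

instance : DecidableRel (Rc (α := α)) := fun _ _ => by unfold Rc; infer_instance

theorem chain'_reduce (L : List (α × Bool)) : List.Chain' Rc (reduce L) := by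
  induction L with
  | nil => simp [List.Chain']
  | cons x L ih =>
    rw [reduce.cons]
    cases h : reduce L with
    | nil => simp [List.Chain']
    | cons hd tl =>
      rw [h] at ih
      by_cases hc : x.1 = hd.1 ∧ x.2 = !hd.2
      · simp only [hc, if_true]
        exact ih.tail
      · simp only [hc, if_false]
        exact List.isChain_cons_cons.mpr ⟨hc, ih⟩

theorem reduce_eq_self_of_chain' {L : List (α × Bool)} (h : List.Chain' Rc L) :
    reduce L = L := by
  induction L with
  | nil => simp
  | cons x L ih =>
    rw [reduce.cons, ih h.tail]
    cases L with
    | nil => simp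
    | cons hd tl =>
      have hR : Rc x hd := (List.isChain_cons_cons.mp h).1
      simp only [Rc] at hR
      simp only [hR, if_false]

theorem chain'_toWord (x : FreeGroup α) : List.Chain' Rc x.toWord := by
  rw [← reduce_toWord]; exact chain'_reduce _

theorem norm_mk_eq {L : List (α × Bool)} (h : List.Chain' Rc L) :
    norm (mk L) = L.length := by
  rw [FreeGroup.norm, toWord_mk, reduce_eq_self_of_chain' h]

theorem mk_ne_one {L : List (α × Bool)} (h : List.Chain' Rc L) (hne : L ≠ []) :
    mk L ≠ 1 := by
  intro he
  apply hne
  have := congrArg toWord he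
  rwa [toWord_mk, reduce_eq_self_of_chain' h, toWord_one] at this

theorem mk_eq_mk_iff {L₁ L₂ : List (α × Bool)} (h₁ : List.Chain' Rc L₁)
    (h₂ : List.Chain' Rc L₂) (h : mk L₁ = mk L₂) : L₁ = L₂ := by
  have := reduce.sound h
  rwa [reduce_eq_self_of_chain' h₁, reduce_eq_self_of_chain' h₂] at this

/-- cyclically reduced -/
def CRed (L : List (α × Bool)) : Prop :=
  List.Chain' Rc L ∧ ∀ p ∈ L.getLast?, ∀ q ∈ L.head?, Rc p q

omit [DecidableEq α] in
theorem cred_nil : CRed ([] : List (α × Bool)) := ⟨by simp [List.Chain'], by simp⟩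




theorem invRev_eq (L : List (α × Bool)) :
    invRev L = (L.map fun p => (p.1, !p.2)).reverse := rfl

theorem head?_invRev (L : List (α × Bool)) :
    (invRev L).head? = L.getLast?.map fun p => (p.1, !p.2) := by
  rw [invRev_eq, List.head?_reverse, List.getLast?_map]

theorem getLast?_invRev (L : List (α × Bool)) :
    (invRev L).getLast? = L.head?.map fun p => (p.1, !p.2) := by
  rw [invRev_eq, List.getLast?_reverse, List.head?_map]

theorem rc_iff (p q : α × Bool) : Rc (p.1, !p.2) (q.1, !q.2) ↔ Rc q p := by
  unfold Rc
  simp only [Bool.not_not]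
  constructor
  · rintro h ⟨h1, h2⟩; exact h ⟨h1.symm, h2.symm⟩
  · rintro h ⟨h1, h2⟩; exact h ⟨h1.symm, h2.symm⟩

theorem chain'_invRev {L : List (α × Bool)} (h : List.Chain' Rc L) :
    List.Chain' Rc (invRev L) := by
  rw [invRev_eq, List.Chain', List.isChain_reverse, List.isChain_map]
  refine h.imp ?_
  intro a b hab
  show Rc (b.1, !b.2) (a.1, !a.2)
  exact (rc_iff b a).mpr hab

theorem cred_invRev {L : List (α × Bool)} (h : CRed L) : CRed (invRev L) := by
  refine ⟨chain'_invRev h.1, ?_⟩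
  intro p hp q hq
  rw [getLast?_invRev, Option.mem_map] at hp
  rw [head?_invRev, Option.mem_map] at hq
  obtain ⟨p₀, hp₀, rfl⟩ := hp
  obtain ⟨q₀, hq₀, rfl⟩ := hq
  exact (rc_iff p₀ q₀).mpr (h.2 q₀ hq₀ p₀ hp₀)

theorem cred_rot {q : α × Bool} {L : List (α × Bool)} (h : CRed (q :: L)) :
    CRed (L ++ [q]) := by
  rcases eq_or_ne L [] with rfl | hL
  · simpa using h
  obtain ⟨c, M, rfl⟩ := List.exists_cons_of_ne_nil hL
  constructor
  · rw [List.Chain', List.isChain_append]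
    refine ⟨h.1.tail, List.isChain_singleton q, ?_⟩
    intro p hp y hy
    simp only [List.head?_cons, Option.mem_def, Option.some.injEq] at hy
    subst hy
    exact h.2 p (by rw [List.getLast?_cons_cons]; exact hp) q rfl
  · intro p hp y hy
    rw [List.getLast?_concat] at hp
    simp only [Option.mem_def, Option.some.injEq] at hp
    subst hp
    simp only [List.cons_append, List.head?_cons, Option.mem_def, Option.some.injEq] at hy
    subst hy
    exact (List.isChain_cons_cons.mp h.1).1

theorem cred_rot' {t : α × Bool} {L : List (α × Bool)} (h : CRed (L ++ [t])) :
    CRed (t :: L) := by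
  rcases eq_or_ne L [] with rfl | hL
  · simpa using h
  obtain ⟨c, M, rfl⟩ := List.exists_cons_of_ne_nil hL
  constructor
  · rw [List.Chain', List.isChain_cons_cons]
    exact ⟨h.2 t List.getLast?_concat c (by simp), h.1.prefix (List.prefix_append _ [t])⟩
  · intro p hp y hy
    simp only [List.head?_cons, Option.mem_def, Option.some.injEq] at hy
    subst hy
    rw [List.getLast?_cons_cons] at hp
    exact (List.isChain_append.mp h.1).2.2 p hp t (by simp)







theorem cred_pow {L : List (α × Bool)} (h : CRed L) (k : ℕ) :
    CRed ((List.replicate k L).flatten) ∧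
      ((List.replicate k L).flatten = [] ∨
        (((List.replicate k L).flatten).head? = L.head? ∧
          ((List.replicate k L).flatten).getLast? = L.getLast?)) := by
  induction k with
  | zero => exact ⟨cred_nil, Or.inl rfl⟩
  | succ k ih =>
    rw [List.replicate_succ, List.flatten_cons]
    set P := (List.replicate k L).flatten with hP
    rcases eq_or_ne P [] with hPn | hPne
    · rw [hPn, List.append_nil]
      exact ⟨h, Or.inr ⟨rfl, rfl⟩⟩
    have hends : P.head? = L.head? ∧ P.getLast? = L.getLast? := by
      rcases ih.2 with h' | h'
      · exact absurd h' hPne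
      · exact h'
    rcases eq_or_ne L [] with rfl | hLne
    · rw [List.nil_append]
      exact ⟨ih.1, Or.inr hends⟩
    refine ⟨⟨?_, ?_⟩, Or.inr ⟨?_, ?_⟩⟩
    · rw [List.Chain', List.isChain_append]
      refine ⟨h.1, ih.1.1, ?_⟩
      intro p hp q hq
      rw [hends.1] at hq
      exact h.2 p hp q hq
    · intro p hp q hq
      rw [List.getLast?_append_of_ne_nil _ hPne, hends.2] at hp
      rw [List.head?_append] at hq
      rw [List.head?_eq_head hLne] at hq
      simp only [Option.some_or] at hq
      exact h.2 p hp q (by rw [List.head?_eq_head hLne]; exact hq)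
    · rw [List.head?_append, List.head?_eq_head hLne]; simp
    · rw [List.getLast?_append_of_ne_nil _ hPne, hends.2]

theorem exists_pow_word {L : List (α × Bool)} (h : CRed L) (k : ℕ) :
    ∃ M, CRed M ∧ (mk L) ^ k = mk M ∧ M.length = k * L.length := by
  refine ⟨(List.replicate k L).flatten, (cred_pow h k).1, pow_mk k, ?_⟩
  simp [List.length_flatten, List.map_replicate, List.sum_replicate, smul_eq_mul]

theorem exists_zpow_word {L : List (α × Bool)} (h : CRed L) (m : ℤ) :
    ∃ M, CRed M ∧ (mk L) ^ m = mk M ∧ M.length = m.natAbs * L.length := by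
  cases m with
  | ofNat k =>
    obtain ⟨M, hM, hpow, hlen⟩ := exists_pow_word h k
    exact ⟨M, hM, by rw [Int.ofNat_eq_coe, zpow_natCast, hpow], by simpa using hlen⟩
  | negSucc k =>
    obtain ⟨M, hM, hpow, hlen⟩ := exists_pow_word h (k + 1)
    refine ⟨invRev M, cred_invRev hM, ?_, ?_⟩
    · rw [zpow_negSucc, hpow, inv_mk]
    · rw [invRev_length, hlen, Int.natAbs_negSucc]

theorem norm_pow_le (x : FreeGroup α) (k : ℕ) : norm (x ^ k) ≤ k * norm x := by
  induction k with
  | zero => simp [FreeGroup.norm_one]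
  | succ k ih =>
    rw [pow_succ]
    calc norm (x ^ k * x) ≤ norm (x ^ k) + norm x := norm_mul_le _ _
      _ ≤ k * norm x + norm x := by omega
      _ = (k + 1) * norm x := by ring

theorem cred_le_norm_conj {L : List (α × Bool)} (h : CRed L) (g : FreeGroup α) :
    L.length ≤ norm (g * mk L * g⁻¹) := by
  set v := g * mk L * g⁻¹ with hv
  have key : ∀ k : ℕ, k * L.length ≤ k * norm v + 2 * norm g := by
    intro k
    obtain ⟨M, hM, hpow, hlen⟩ := exists_pow_word h k
    have h1 : norm ((mk L) ^ k) = k * L.length := by rw [hpow, norm_mk_eq hM.1, hlen]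
    have h2 : (mk L) ^ k = g⁻¹ * v ^ k * g := by rw [hv, conj_pow]; group
    calc k * L.length = norm ((mk L) ^ k) := h1.symm
      _ = norm (g⁻¹ * v ^ k * g) := by rw [h2]
      _ ≤ norm (g⁻¹ * v ^ k) + norm g := norm_mul_le _ _
      _ ≤ norm g⁻¹ + norm (v ^ k) + norm g := by
          have := norm_mul_le g⁻¹ (v ^ k); omega
      _ ≤ norm g + k * norm v + norm g := by
          have h3 := norm_pow_le v k
          have h4 : norm g⁻¹ = norm g := norm_inv_eq
          omega
      _ = k * norm v + 2 * norm g := by ring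
  by_contra hlt
  push_neg at hlt
  have := key (2 * norm g + 1)
  nlinarith

theorem conj_cred_length_eq {L₁ L₂ : List (α × Bool)} (h₁ : CRed L₁) (h₂ : CRed L₂)
    (g : FreeGroup α) (h : g * mk L₁ * g⁻¹ = mk L₂) : L₁.length = L₂.length := by
  have le₁ : L₁.length ≤ L₂.length := by
    have := cred_le_norm_conj h₁ g
    rwa [h, norm_mk_eq h₂.1] at this
  have le₂ : L₂.length ≤ L₁.length := by
    have h' : g⁻¹ * mk L₂ * g⁻¹⁻¹ = mk L₁ := by rw [← h]; group
    have := cred_le_norm_conj h₂ g⁻¹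
    rwa [h', norm_mk_eq h₁.1] at this
  omega


theorem exists_cycRed_aux : ∀ n : ℕ, ∀ x : FreeGroup α, norm x ≤ n →
    ∃ c L, CRed L ∧ x = c * mk L * c⁻¹ := by
  intro n
  induction n with
  | zero =>
    intro x hx
    have : x = 1 := norm_eq_zero.mp (Nat.le_zero.mp hx)
    refine ⟨1, [], cred_nil, ?_⟩
    rw [this, ← one_eq_mk]
    simp
  | succ n ih =>
    intro x hx
    set L := x.toWord with hLdef
    have hL : List.Chain' Rc L := chain'_toWord x
    have hxL : x = mk L := (mk_toWord).symm
    have hnx : norm x = L.length := rfl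
    by_cases hcyc : ∀ p ∈ L.getLast?, ∀ q ∈ L.head?, Rc p q
    · exact ⟨1, L, ⟨hL, hcyc⟩, by simpa using hxL⟩
    push_neg at hcyc
    obtain ⟨p, hp, q, hq, hR⟩ := hcyc
    have hpq : p.1 = q.1 ∧ p.2 = !q.2 := not_not.mp hR
    cases hLc : L with
    | nil => rw [hLc] at hq; simp at hq
    | cons q₀ Lt =>
      rw [hLc] at hq
      simp only [List.head?_cons, Option.mem_def, Option.some.injEq] at hq
      rw [hq] at hLc
      rcases List.eq_nil_or_concat Lt with rfl | ⟨M, p₀, rfl⟩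
      · rw [hLc] at hp
        simp only [List.getLast?_singleton, Option.mem_def, Option.some.injEq] at hp
        subst hp
        simp at hpq
      · rw [List.concat_eq_append] at hLc
        rw [hLc] at hp
        have : (q :: (M ++ [p₀])).getLast? = some p₀ := by
          rw [show q :: (M ++ [p₀]) = (q :: M) ++ [p₀] by simp, List.getLast?_concat]
        rw [this] at hp
        simp only [Option.mem_def, Option.some.injEq] at hp
        rw [hp] at hLc
        have hpe : p = (q.1, !q.2) := Prod.ext hpq.1 hpq.2
        have hxsplit : x = mk [q] * mk M * mk [p] := by
          rw [hxL, hLc, mul_mk, mul_mk]; simp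
        have hpinv : mk [p] = (mk [q])⁻¹ := by
          rw [inv_mk, hpe]; rfl
        have hlen : L.length = M.length + 2 := by rw [hLc]; simp
        have hnM : norm (mk M) ≤ n := by
          have h1 : norm (mk M) ≤ M.length := norm_mk_le
          omega
        obtain ⟨c, L₀, hc, hrep⟩ := ih (mk M) hnM
        refine ⟨mk [q] * c, L₀, hc, ?_⟩
        rw [hxsplit, hpinv, hrep]
        group

theorem exists_cycRed (x : FreeGroup α) : ∃ c L, CRed L ∧ x = c * mk L * c⁻¹ :=
  exists_cycRed_aux (norm x) x le_rfl

theorem cred_ne_nil_of_ne_one {x c : FreeGroup α} {L : List (α × Bool)}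
    (hx : x ≠ 1) (hrep : x = c * mk L * c⁻¹) : L ≠ [] := by
  rintro rfl
  apply hx
  rw [hrep]
  simp [show mk ([] : List (α × Bool)) = 1 from rfl]

theorem sq_ne_one {x : FreeGroup α} (hx : x ≠ 1) : x * x ≠ 1 := by
  obtain ⟨c, L, hc, hrep⟩ := exists_cycRed x
  have hLne : L ≠ [] := cred_ne_nil_of_ne_one hx hrep
  obtain ⟨M, hM, hpow, hlen⟩ := exists_pow_word hc 2
  have hMne : M ≠ [] := by
    intro h
    apply hLne
    rw [h] at hlen
    simp only [List.length_nil] at hlen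
    have : L.length = 0 := by omega
    exact List.eq_nil_of_length_eq_zero this
  have hMne1 : mk M ≠ 1 := mk_ne_one hM.1 hMne
  intro he
  apply hMne1
  have hxx : x * x = c * mk M * c⁻¹ := by
    rw [hrep, ← hpow, pow_two]
    group
  rw [hxx] at he
  have : mk M = c⁻¹ * 1 * c := by rw [← he]; group
  simpa using this

theorem invRev_append (A B : List (α × Bool)) :
    invRev (A ++ B) = invRev B ++ invRev A := by
  simp [invRev_eq]

theorem self_invRev_nil {u : List (α × Bool)} (hu : List.Chain' Rc u)
    (h : invRev u = u) : u = [] := by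
  by_contra hne
  have h1 : mk u ≠ 1 := mk_ne_one hu hne
  apply sq_ne_one h1
  nth_rewrite 2 [← h]
  rw [← inv_mk, mul_inv_cancel]

theorem rot_single (q : α × Bool) (L : List (α × Bool)) : (q :: L) ~r (L ++ [q]) :=
  ⟨1, by rw [List.rotate_cons_succ, List.rotate_zero]⟩

theorem rot_aux : ∀ N : ℕ, ∀ (g : FreeGroup α) (L₁ L₂ : List (α × Bool)), norm g ≤ N →
    CRed L₁ → CRed L₂ → g * mk L₁ * g⁻¹ = mk L₂ → L₁ ~r L₂ := by
  intro N
  induction N with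
  | zero =>
    intro g L₁ L₂ hg h₁ h₂ hconj
    have hg1 : g = 1 := norm_eq_zero.mp (Nat.le_zero.mp hg)
    rw [hg1, one_mul, inv_one, mul_one] at hconj
    rw [mk_eq_mk_iff h₁.1 h₂.1 hconj]
  | succ N ih =>
    intro g L₁ L₂ hg h₁ h₂ hconj
    set G := g.toWord with hG
    have hgG : g = mk G := (mk_toWord).symm
    have hGc : List.Chain' Rc G := chain'_toWord g
    have hng : norm g = G.length := rfl
    rcases List.eq_nil_or_concat G with hGn | ⟨G₀, s, hGs⟩
    · have hg1 : g = 1 := by rw [hgG, hGn, ← one_eq_mk]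
      rw [hg1, one_mul, inv_one, mul_one] at hconj
      rw [mk_eq_mk_iff h₁.1 h₂.1 hconj]
    rw [List.concat_eq_append] at hGs
    have hGlen : G.length = G₀.length + 1 := by rw [hGs]; simp
    have hG₀c : List.Chain' Rc G₀ := hGc.prefix (hGs ▸ List.prefix_append _ _)
    have hngG₀ : norm (mk G₀) ≤ N := by
      rw [norm_mk_eq hG₀c]; omega
    cases hL₁ : L₁ with
    | nil =>
      rw [hL₁] at hconj
      have h2 : mk L₂ = mk [] := by
        rw [← hconj, ← one_eq_mk]; group
      rw [mk_eq_mk_iff h₂.1 (by simp [List.Chain']) h2]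
    | cons q L' =>
      rw [hL₁] at h₁ hconj
      by_cases hA : ¬ Rc s q
      · -- left cancellation
        have hpq := not_not.mp hA
        have hqs : q = (s.1, !s.2) := Prod.ext hpq.1.symm (by simp [hpq.2])
        have hsinv : mk [q] = (mk [s])⁻¹ := by rw [inv_mk, hqs]; rfl
        have hrot : CRed (L' ++ [q]) := cred_rot h₁
        have hsplit : mk (q :: L') = mk [q] * mk L' := by rw [mul_mk]; rfl
        have hstep : mk G₀ * mk (L' ++ [q]) * (mk G₀)⁻¹ = mk L₂ := by
          rw [← hconj, hgG, hGs, ← mul_mk (L₁ := G₀) (L₂ := [s]),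
            ← mul_mk (L₁ := L') (L₂ := [q]), hsplit, hsinv]
          group
        exact (rot_single q L').trans (ih (mk G₀) _ _ hngG₀ hrot h₂ hstep)
      · have hA' : Rc s q := not_not.mp hA
        rcases List.eq_nil_or_concat (q :: L') with h' | ⟨L'', t, hL₁t⟩
        · exact absurd h' (by simp)
        rw [List.concat_eq_append] at hL₁t
        by_cases hB : t = s
        · -- right cancellation
          subst hB
          rw [hL₁t] at h₁ hconj
          have hrot : CRed (t :: L'') := cred_rot' h₁
          have hsplit : mk (t :: L'') = mk [t] * mk L'' := by rw [mul_mk]; rfl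
          have hstep : mk G₀ * mk (t :: L'') * (mk G₀)⁻¹ = mk L₂ := by
            rw [← hconj, hgG, hGs, ← mul_mk (L₁ := G₀) (L₂ := [t]),
              ← mul_mk (L₁ := L'') (L₂ := [t]), hsplit]
            group
          rw [hL₁t]
          exact ((rot_single t L'').symm).trans (ih (mk G₀) _ _ hngG₀ hrot h₂ hstep)
        · -- no cancellation: contradiction via lengths
          exfalso
          have hqhead : (q :: L').head? = some q := rfl
          have htlast : (q :: L').getLast? = some t := by
            rw [hL₁t, List.getLast?_concat]
          have hWc : List.Chain' Rc (G ++ ((q :: L') ++ invRev G)) := by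
            rw [List.Chain', List.isChain_append]
            refine ⟨hGc, ?_, ?_⟩
            · rw [List.isChain_append]
              refine ⟨h₁.1, chain'_invRev hGc, ?_⟩
              intro p hp y hy
              rw [head?_invRev, hGs, List.getLast?_concat] at hy
              simp only [Option.map_some, Option.mem_def, Option.some.injEq] at hy
              rw [htlast] at hp
              simp only [Option.mem_def, Option.some.injEq] at hp
              subst hp
              subst hy
              rintro ⟨e1, e2⟩
              simp only [Bool.not_not] at e2
              exact hB (Prod.ext e1 e2)
            · intro p hp y hy
              rw [hGs, List.getLast?_concat] at hp
              simp only [Option.mem_def, Option.some.injEq] at hp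
              subst hp
              rw [List.cons_append, List.head?_cons] at hy
              simp only [Option.mem_def, Option.some.injEq] at hy
              subst hy
              exact hA'
          have hWeq : mk (G ++ ((q :: L') ++ invRev G)) = mk L₂ := by
            rw [← hconj, hgG, ← mul_mk, ← mul_mk]
            have : (mk G : FreeGroup α)⁻¹ = mk (invRev G) := inv_mk
            rw [← this]
            group
          have hWL := mk_eq_mk_iff hWc h₂.1 hWeq
          have hlen := conj_cred_length_eq h₁ h₂ g hconj
          have hlW := congrArg List.length hWL
          simp only [List.length_append, invRev_length] at hlW
          omega

theorem rot_conj {L₁ L₂ : List (α × Bool)} (h₁ : CRed L₁) (h₂ : CRed L₂)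
    (g : FreeGroup α) (h : g * mk L₁ * g⁻¹ = mk L₂) : L₁ ~r L₂ :=
  rot_aux (norm g) g L₁ L₂ le_rfl h₁ h₂ h

theorem conj_transfer {x y c h : FreeGroup α} {u v : List (α × Bool)}
    (hx : x = c * mk u * c⁻¹) (hy : y = c * mk v * c⁻¹) (hc : h * x * h⁻¹ = y) :
    (c⁻¹ * h * c) * mk u * (c⁻¹ * h * c)⁻¹ = mk v := by
  rw [hx, hy] at hc
  calc (c⁻¹ * h * c) * mk u * (c⁻¹ * h * c)⁻¹
      = c⁻¹ * (h * (c * mk u * c⁻¹) * h⁻¹) * c := by group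
    _ = c⁻¹ * (c * mk v * c⁻¹) * c := by rw [hc]
    _ = mk v := by group

theorem no_conj_inv {x h : FreeGroup α} (hx : x ≠ 1) (hc : h * x * h⁻¹ = x⁻¹) : False := by
  obtain ⟨c, L, hL, hrep⟩ := exists_cycRed x
  have hLne : L ≠ [] := cred_ne_nil_of_ne_one hx hrep
  have hinvrep : x⁻¹ = c * mk (invRev L) * c⁻¹ := by
    rw [hrep, ← inv_mk]; group
  have hkey := conj_transfer hrep hinvrep hc
  have hrot := rot_conj hL (cred_invRev hL) _ hkey
  obtain ⟨n, hn⟩ := hrot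
  rw [← List.rotate_mod] at hn
  set n' := n % L.length with hn'
  have hlt : n' < L.length := Nat.mod_lt _ (List.length_pos_iff.mpr hLne)
  rw [List.rotate_eq_drop_append_take (le_of_lt hlt)] at hn
  have hsplit : invRev L = invRev (L.drop n') ++ invRev (L.take n') := by
    conv_lhs => rw [← List.take_append_drop n' L]
    rw [invRev_append]
  obtain ⟨e1, e2⟩ := List.append_inj (hn.trans hsplit) (by rw [invRev_length])
  have hd : L.drop n' = [] := self_invRev_nil (hL.1.drop n') e1.symm
  have ht : L.take n' = [] := self_invRev_nil (hL.1.take n') e2.symm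
  apply hLne
  rw [← List.take_append_drop n' L, hd, ht]
  rfl

theorem zpow_rep {z c : FreeGroup α} {L : List (α × Bool)} (hL : CRed L)
    (hrep : z = c * mk L * c⁻¹) (m : ℤ) :
    ∃ M, CRed M ∧ z ^ m = c * mk M * c⁻¹ ∧ M.length = m.natAbs * L.length := by
  obtain ⟨M, hM, hpow, hlen⟩ := exists_zpow_word hL m
  exact ⟨M, hM, by rw [hrep, conj_zpow, hpow], hlen⟩

theorem conj_zpow_eq {z h : FreeGroup α} (hz : z ≠ 1) {m n : ℤ}
    (he : h * z ^ m * h⁻¹ = z ^ n) : m = n := by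
  obtain ⟨c, L, hL, hrep⟩ := exists_cycRed z
  have hLne : L ≠ [] := cred_ne_nil_of_ne_one hz hrep
  have hLpos : 0 < L.length := List.length_pos_iff.mpr hLne
  obtain ⟨Mm, hMm, hmrep, hmlen⟩ := zpow_rep hL hrep m
  obtain ⟨Mn, hMn, hnrep, hnlen⟩ := zpow_rep hL hrep n
  have hkey := conj_transfer hmrep hnrep he
  have hlen := conj_cred_length_eq hMm hMn _ hkey
  have habs : m.natAbs = n.natAbs := by
    rw [hmlen, hnlen] at hlen
    exact Nat.eq_of_mul_eq_mul_right hLpos hlen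
  rcases Int.natAbs_eq_natAbs_iff.mp habs with h' | h'
  · exact h'
  · -- m = -n
    rcases eq_or_ne n 0 with rfl | hn0
    · simpa using h'
    exfalso
    have hwne : z ^ n ≠ 1 := by
      intro hw
      rw [hnrep] at hw
      have : mk Mn = c⁻¹ * 1 * c := by rw [← hw]; group
      have hMnnil : Mn = [] := by
        have h1 : mk Mn = mk [] := by rw [this, ← one_eq_mk]; group
        exact mk_eq_mk_iff hMn.1 (by simp [List.Chain']) h1
      rw [hMnnil] at hnlen
      simp at hnlen
      rcases hnlen with h2 | h2
      · exact hn0 h2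
      · exact hLne h2
    apply no_conj_inv hwne (h := h)
    have hmn : z ^ m = (z ^ n)⁻¹ := by rw [h', zpow_neg]
    rw [hmn] at he
    calc h * z ^ n * h⁻¹ = (h * (z ^ n)⁻¹ * h⁻¹)⁻¹ := by group
      _ = (z ^ n)⁻¹ := by rw [he]


theorem gen_comm_eq {β : Type} [DecidableEq β] {a b : β}
    (h : FreeGroup.of a * FreeGroup.of b = FreeGroup.of b * FreeGroup.of a) : a = b := by
  have hmk : ∀ u v : β, FreeGroup.of u * FreeGroup.of v = mk [(u, true), (v, true)] := by
    intro u v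
    rw [show FreeGroup.of u = mk [(u, true)] from rfl,
      show FreeGroup.of v = mk [(v, true)] from rfl, mul_mk]
    rfl
  have hch : ∀ u v : β, List.Chain' Rc [(u, true), (v, true)] := by
    intro u v
    refine List.isChain_cons_cons.mpr ⟨?_, List.isChain_singleton _⟩
    rintro ⟨-, h2⟩
    simp at h2
  have := congrArg toWord h
  rw [hmk, hmk, toWord_mk, toWord_mk, reduce_eq_self_of_chain' (hch a b),
    reduce_eq_self_of_chain' (hch b a)] at this
  simp at this
  exact this.1

theorem cyclic_structure {β : Type} (hcomm : ∀ u v : FreeGroup β, u * v = v * u) :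
    ∃ ζ : FreeGroup β, ∀ u : FreeGroup β, ∃ n : ℤ, u = ζ ^ n := by
  classical
  by_cases hβ : Nonempty β
  · obtain ⟨b0⟩ := hβ
    haveI : Subsingleton β := ⟨fun a b => gen_comm_eq (hcomm _ _)⟩
    refine ⟨FreeGroup.of b0, fun u => ?_⟩
    refine FreeGroup.induction_on u ⟨0, by simp⟩ (fun x => ⟨1, ?_⟩) (fun x _ => ⟨-1, ?_⟩) ?_
    · rw [Subsingleton.elim x b0, zpow_one]
    · rw [Subsingleton.elim x b0, zpow_neg, zpow_one]
    · rintro x y ⟨p, rfl⟩ ⟨q, rfl⟩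
      exact ⟨p + q, by rw [zpow_add]⟩
  · refine ⟨1, fun u => ⟨0, ?_⟩⟩
    simp only [zpow_zero]
    refine FreeGroup.induction_on u rfl (fun x => (hβ ⟨x⟩).elim) (fun x _ => (hβ ⟨x⟩).elim) ?_
    rintro x y hx hy
    rw [hx, hy, one_mul]

theorem comm_cyclic {G : Type} [Group G] [IsFreeGroup G] (x y : G) (h : x * y = y * x) :
    ∃ z : G, (∃ m : ℤ, x = z ^ m) ∧ (∃ n : ℤ, y = z ^ n) := by
  classical
  set H := Subgroup.closure ({x, y} : Set G) with hH
  have hxH : x ∈ H := Subgroup.subset_closure (by simp)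
  have hyH : y ∈ H := Subgroup.subset_closure (by simp)
  have hpairs : ∀ u ∈ ({x, y} : Set G), ∀ v ∈ ({x, y} : Set G), u * v = v * u := by
    rintro u hu v hv
    simp only [Set.mem_insert_iff, Set.mem_singleton_iff] at hu hv
    rcases hu with rfl | rfl <;> rcases hv with rfl | rfl
    · rfl
    · exact h
    · exact h.symm
    · rfl
  letI : CommGroup H := Subgroup.closureCommGroupOfComm hpairs
  have hcommH : ∀ u v : H, u * v = v * u := fun u v => mul_comm u v
  obtain ⟨β, ⟨bas⟩⟩ := IsFreeGroup.nonempty_basis (G := H)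
  set e : H ≃* FreeGroup β := bas.repr with he
  have hFGcomm : ∀ u v : FreeGroup β, u * v = v * u := by
    intro u v
    apply e.symm.injective
    rw [_root_.map_mul, _root_.map_mul, hcommH]
  obtain ⟨ζ, hζ⟩ := cyclic_structure hFGcomm
  refine ⟨(e.symm ζ : G), ?_, ?_⟩
  · obtain ⟨m, hm⟩ := hζ (e ⟨x, hxH⟩)
    refine ⟨m, ?_⟩
    have h2 : (⟨x, hxH⟩ : H) = (e.symm ζ) ^ m := by
      apply e.injective
      rw [_root_.map_zpow, MulEquiv.apply_symm_apply]
      exact hm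
    calc x = ((⟨x, hxH⟩ : H) : G) := rfl
      _ = (((e.symm ζ) ^ m : H) : G) := by rw [← h2]
      _ = (e.symm ζ : G) ^ m := SubgroupClass.coe_zpow _ m
  · obtain ⟨n, hn⟩ := hζ (e ⟨y, hyH⟩)
    refine ⟨n, ?_⟩
    have h2 : (⟨y, hyH⟩ : H) = (e.symm ζ) ^ n := by
      apply e.injective
      rw [_root_.map_zpow, MulEquiv.apply_symm_apply]
      exact hn
    calc y = ((⟨y, hyH⟩ : H) : G) := rfl
      _ = (((e.symm ζ) ^ n : H) : G) := by rw [← h2]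
      _ = (e.symm ζ : G) ^ n := SubgroupClass.coe_zpow _ n

theorem free_key {ι : Type} (x y h : FreeGroup ι) (hx : x ≠ 1)
    (hc : x * y = y * x) (hconj : y = h * x * h⁻¹) : x = y := by
  classical
  obtain ⟨z, ⟨m, hm⟩, ⟨n, hn⟩⟩ := comm_cyclic x y hc
  have hz : z ≠ 1 := by
    rintro rfl
    rw [one_zpow] at hm
    exact hx hm
  have he : h * z ^ m * h⁻¹ = z ^ n := by
    rw [← hm, ← hn]
    exact hconj.symm
  have := conj_zpow_eq hz he
  rw [hm, hn, this]

end FGWork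


def OmegaResiduallyFree (L : Type) [Group L] : Prop :=
  ∀ W : Finset L, ∃ (ι : Type) (f : L →* FreeGroup ι), Set.InjOn f ↑W

theorem orf_conjugate_commuting_eq (L : Type) [Group L] (hL : OmegaResiduallyFree L)
    (a b g : L) (ha : a ≠ 1) (hb : b ≠ 1) (hab : a * b = b * a)
    (hconj : b = g * a * g⁻¹) : a = b := by
  classical
  obtain ⟨ι, f, hinj⟩ := hL ({1, a, b} : Finset L)
  have m1 : (1 : L) ∈ (↑({1, a, b} : Finset L) : Set L) := by simp
  have ma : a ∈ (↑({1, a, b} : Finset L) : Set L) := by simp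
  have mb : b ∈ (↑({1, a, b} : Finset L) : Set L) := by simp
  have hfa : f a ≠ 1 := fun h => ha (hinj ma m1 (by rw [h, _root_.map_one]))
  have hconj' : f b = f g * f a * (f g)⁻¹ := by
    rw [hconj, _root_.map_mul, _root_.map_mul, _root_.map_inv]
  have hcomm' : f a * f b = f b * f a := by
    rw [← _root_.map_mul, ← _root_.map_mul, hab]
  have := FGWork.free_key (f a) (f b) (f g) hfa hcomm' hconj'
  exact hinj ma mb this
end

section
/- Coarse intersection of axes forces commensurable powers: Let Z be a proper metric space and let u, v be isometries of Z such that the subgroup ⟨u, v⟩ of Isom(Z) acts properly discontinuously on Z (for each x ∈ Z and R > 0, only finitely many elements g ∈ ⟨u,v⟩ satisfy d(g·x, x) ≤ R). Suppose A_u and A_v are subsets of Z on which u, respectively v, acts as a nontrivial translation along a geodesic line (u·A_u = A_u with u translating points of A_u by a fixed positive amount |u| along the line, and similarly for v). If for some k > 0 the intersection N_k(A_u) ∩ N_k(A_v) is unbounded, then there exist nonzero integers m, n with u^m = v^n. -/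
private lemma zpow_translate_aux {Z : Type} [MetricSpace Z] (u : Z ≃ᵢ Z) (ρ : ℝ → Z) (c : ℝ)
    (ht : ∀ t, u (ρ t) = ρ (t + c)) : ∀ (j : ℤ) (t : ℝ), (u ^ j) (ρ t) = ρ (t + j * c) := by
  have hinv : ∀ t, u⁻¹ (ρ t) = ρ (t - c) := by
    intro t
    have h1 : u (ρ (t - c)) = ρ t := by rw [ht]; ring_nf
    have := (congrArg u.symm h1).symm
    simp at this; exact this
  intro j
  induction j using Int.induction_on with
  | zero => simp
  | succ n ih =>
      intro t
      have h2 : u ^ ((n : ℤ) + 1) = u ^ (n : ℤ) * u := by rw [zpow_add, zpow_one]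
      rw [h2]
      show (u ^ (n : ℤ)) (u (ρ t)) = _
      rw [ht, ih]
      congr 1; push_cast; ring
  | pred n ih =>
      intro t
      have h2 : u ^ (-(n : ℤ) - 1) = u ^ (-(n : ℤ)) * u⁻¹ := by
        rw [← zpow_neg_one, ← zpow_add]; ring_nf
      rw [h2]
      show (u ^ (-(n : ℤ))) (u⁻¹ (ρ t)) = _
      rw [hinv, ih]
      congr 1; push_cast; ring

private lemma fract_calc_aux (c s : ℝ) (hc : 0 < c) :
    |s + (-(⌊s / c⌋ : ℤ) : ℤ) * c| ≤ c := by
  have h1 : s + ((-(⌊s / c⌋ : ℤ) : ℤ) : ℝ) * c = c * Int.fract (s / c) := by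
    rw [Int.fract]; push_cast; field_simp; ring
  rw [h1, abs_of_nonneg (mul_nonneg hc.le (Int.fract_nonneg _))]
  calc c * Int.fract (s / c) ≤ c * 1 :=
        mul_le_mul_of_nonneg_left (Int.fract_lt_one _).le hc.le
    _ = c := mul_one c

private lemma near_aux {Z : Type} [MetricSpace Z] (A : Set Z) (ρ : ℝ → Z)
    (hA : A = Set.range ρ) (k : ℝ) (hk : 0 < k) (z : Z)
    (hz : z ∈ Metric.cthickening k A) : ∃ s : ℝ, dist z (ρ s) ≤ k + 1 := by
  rw [Metric.mem_cthickening_iff] at hz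
  have h2 : EMetric.infEdist z A < ENNReal.ofReal (k + 1) := lt_of_le_of_lt hz (by
    apply ENNReal.ofReal_lt_ofReal_iff_of_nonneg hk.le |>.2; linarith)
  obtain ⟨p, hp, hd⟩ := EMetric.infEdist_lt_iff.1 h2
  rw [hA] at hp
  obtain ⟨s, rfl⟩ := hp
  refine ⟨s, ?_⟩
  rw [edist_dist] at hd
  exact le_of_lt ((ENNReal.ofReal_lt_ofReal_iff (by linarith)).1 hd)

theorem coarse_intersection_of_axes_forces_commensurable_powers
    (Z : Type) [MetricSpace Z] [ProperSpace Z]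
    (u v : Z ≃ᵢ Z)
    (hprop : ∀ (x : Z) (R : ℝ), 0 < R →
      {g : Z ≃ᵢ Z | g ∈ Subgroup.closure {u, v} ∧ dist (g x) x ≤ R}.Finite)
    (ρu ρv : ℝ → Z) (hρu : Isometry ρu) (hρv : Isometry ρv)
    (Au Av : Set Z) (hAu : Au = Set.range ρu) (hAv : Av = Set.range ρv)
    (cu cv : ℝ) (hcu : 0 < cu) (hcv : 0 < cv)
    (htu : ∀ t : ℝ, u (ρu t) = ρu (t + cu))
    (htv : ∀ t : ℝ, v (ρv t) = ρv (t + cv))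
    (k : ℝ) (hk : 0 < k)
    (hbig : ¬ Bornology.IsBounded
      (Metric.cthickening k Au ∩ Metric.cthickening k Av)) :
    ∃ m n : ℤ, m ≠ 0 ∧ n ≠ 0 ∧ u ^ m = v ^ n := by
  classical
  have key_u := zpow_translate_aux u ρu cu htu
  have key_v := zpow_translate_aux v ρv cv htv
  set x0 := ρu 0 with hx0
  set y0 := ρv 0 with hy0
  set R : ℝ := cu + cv + 2 * (k + 1) + dist x0 y0 with hR
  have hdnn : (0:ℝ) ≤ dist x0 y0 := dist_nonneg
  have hRpos : 0 < R := by rw [hR]; linarith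
  set Fs := {g : Z ≃ᵢ Z | g ∈ Subgroup.closure {u, v} ∧ dist (g y0) y0 ≤ R} with hFs
  have hF : Fs.Finite := hprop y0 R hRpos
  have huc : u ∈ Subgroup.closure ({u, v} : Set (Z ≃ᵢ Z)) :=
    Subgroup.subset_closure (Set.mem_insert _ _)
  have hvc : v ∈ Subgroup.closure ({u, v} : Set (Z ≃ᵢ Z)) :=
    Subgroup.subset_closure (Set.mem_insert_of_mem _ rfl)
  -- main construction: for each n, integers a b with large |a| and g := u^a * (v^b)⁻¹ ∈ Fs
  have main : ∀ n : ℕ, ∃ a b : ℤ,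
      (n : ℝ) - (k + 1) - cu ≤ |(a : ℝ)| * cu ∧ (u ^ a * (v ^ b)⁻¹) ∈ Fs := by
    intro n
    -- unbounded set gives a far point
    obtain ⟨z, hzS, hzd⟩ : ∃ z ∈ Metric.cthickening k Au ∩ Metric.cthickening k Av,
        (n : ℝ) < dist z x0 := by
      by_contra hc
      push_neg at hc
      exact hbig (Metric.isBounded_iff_subset_closedBall x0 |>.2 ⟨n, fun z hz => hc z hz⟩)
    obtain ⟨s, hs⟩ := near_aux Au ρu hAu k hk z hzS.1
    obtain ⟨t, ht⟩ := near_aux Av ρv hAv k hk z hzS.2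
    refine ⟨-⌊s / cu⌋, -⌊t / cv⌋, ?_, ?_, ?_⟩
    · -- |a| bound
      have h1 : |s + (-(⌊s / cu⌋ : ℤ) : ℤ) * cu| ≤ cu := fract_calc_aux cu s hcu
      have h2 : dist (ρu s) x0 = |s| := by
        rw [hx0, hρu.dist_eq, Real.dist_eq, sub_zero]
      have h3 : (n : ℝ) - (k + 1) ≤ |s| := by
        have := dist_triangle z (ρu s) x0
        rw [h2] at this
        linarith [hzd, hs, dist_comm z (ρu s) ▸ hs]
      have h4 : |s| ≤ cu + |(((-⌊s / cu⌋ : ℤ)) : ℝ)| * cu := by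
        set w : ℝ := ((-⌊s / cu⌋ : ℤ) : ℝ) * cu with hw
        have habs := abs_add_le (s + w) (-w)
        rw [abs_neg] at habs
        have hsw : s + w + -w = s := by ring
        rw [hsw] at habs
        have h5 : |w| = |((-⌊s / cu⌋ : ℤ) : ℝ)| * cu := by
          rw [hw, abs_mul, abs_of_pos hcu]
        rw [h5] at habs
        push_cast at h1 habs ⊢
        linarith
      push_cast at h4 ⊢
      linarith
    · -- closure membership
      exact Subgroup.mul_mem _ (Subgroup.zpow_mem _ huc _)
        (Subgroup.inv_mem _ (Subgroup.zpow_mem _ hvc _))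
    · -- distance bound
      set a : ℤ := -⌊s / cu⌋
      set b : ℤ := -⌊t / cv⌋
      have happ : (u ^ a * (v ^ b)⁻¹) y0 = (u ^ a) (ρv (0 + (-b) * cv)) := by
        show (u ^ a) ((v ^ b)⁻¹ y0) = _
        rw [← zpow_neg, hy0, key_v]
        norm_cast
      have hq : dist (ρv (0 + (-b) * cv)) (ρv t) = |(0 + (-b : ℝ) * cv) - t| := by
        rw [hρv.dist_eq, Real.dist_eq]
      have hqb : |(0 + (-(b : ℝ)) * cv) - t| ≤ cv := by
        have := fract_calc_aux cv t hcv
        have heq : (0 + (-(b : ℝ)) * cv) - t = -(t + ((-⌊t / cv⌋ : ℤ) : ℝ) * cv) := by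
          show (0 + (-(b : ℝ)) * cv) - t = _
          push_cast [b]
          ring
        rw [heq, abs_neg]
        push_cast at this ⊢
        linarith
      have hpq : dist (ρv t) (ρu s) ≤ 2 * (k + 1) := by
        have d1 := dist_triangle (ρv t) z (ρu s)
        have := dist_comm z (ρv t)
        linarith [ht, hs, d1, dist_comm z (ρv t) ▸ ht]
      have hps : dist ((u ^ a) (ρu s)) x0 ≤ cu := by
        rw [key_u a s, hx0, hρu.dist_eq, Real.dist_eq, sub_zero]
        have := fract_calc_aux cu s hcu
        push_cast at this ⊢
        convert this using 2
        push_cast [a]; ring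
      have hdist : dist ((u ^ a * (v ^ b)⁻¹) y0) y0 ≤ R := by
        have e1 : dist ((u ^ a) (ρv (0 + (-b) * cv))) ((u ^ a) (ρv t)) = 
            dist (ρv (0 + (-b) * cv)) (ρv t) := (u ^ a).dist_eq _ _
        have e2 : dist ((u ^ a) (ρv t)) ((u ^ a) (ρu s)) = dist (ρv t) (ρu s) :=
          (u ^ a).dist_eq _ _
        have t1 := dist_triangle ((u ^ a) (ρv (0 + (-b) * cv))) ((u ^ a) (ρv t)) ((u ^ a) (ρu s))
        have t2 := dist_triangle ((u ^ a) (ρv (0 + (-b) * cv))) ((u ^ a) (ρu s)) x0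
        have t3 := dist_triangle ((u ^ a) (ρv (0 + (-b) * cv))) x0 y0
        rw [happ]
        rw [e1] at t1
        rw [e2] at t1
        rw [hq] at t1
        rw [hR]
        push_cast at hqb t1 ⊢
        linarith
      exact hdist
  choose a b hA hG using main
  haveI : Finite ↥Fs := hF.to_subtype
  obtain ⟨g0, hg0⟩ := Finite.exists_infinite_fiber
    (fun n : ℕ => (⟨u ^ a n * (v ^ b n)⁻¹, hG n⟩ : ↥Fs))
  have hg0' := Set.infinite_coe_iff.1 hg0
  obtain ⟨n0, hn0⟩ := hg0'.nonempty
  obtain ⟨n1, hn1, hlt⟩ := hg0'.exists_gt (Nat.ceil (cu * (|(a n0 : ℝ)| + 1) + (k + 1) + cu))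
  -- |a n1| > |a n0|
  have hcast : (cu * (|(a n0 : ℝ)| + 1) + (k + 1) + cu) < (n1 : ℝ) := by
    have h1 : (cu * (|(a n0 : ℝ)| + 1) + (k + 1) + cu) ≤
        (Nat.ceil (cu * (|(a n0 : ℝ)| + 1) + (k + 1) + cu) : ℝ) := Nat.le_ceil _
    have h2 : ((Nat.ceil (cu * (|(a n0 : ℝ)| + 1) + (k + 1) + cu) : ℕ) : ℝ) < (n1 : ℝ) := by
      exact_mod_cast hlt
    linarith
  have hane : a n1 ≠ a n0 := by
    intro heq
    have hb1 := hA n1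
    rw [heq] at hb1
    nlinarith [hb1, hcast, abs_nonneg ((a n0 : ℝ))]
  -- equality of group elements
  have heqg : u ^ a n1 * (v ^ b n1)⁻¹ = u ^ a n0 * (v ^ b n0)⁻¹ := by
    have e1 : (⟨u ^ a n1 * (v ^ b n1)⁻¹, hG n1⟩ : ↥Fs) = g0 := hn1
    have e0 : (⟨u ^ a n0 * (v ^ b n0)⁻¹, hG n0⟩ : ↥Fs) = g0 := hn0
    have := e1.trans e0.symm
    exact Subtype.ext_iff.1 this
  refine ⟨a n1 - a n0, b n1 - b n0, sub_ne_zero.2 hane, ?_, ?_⟩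
  · -- b n1 - b n0 ≠ 0
    intro hb0
    have key : u ^ (a n1 - a n0) = v ^ (b n1 - b n0) := by
      have h1 : u ^ a n1 = u ^ a n0 * (v ^ b n0)⁻¹ * v ^ b n1 := by
        rw [← heqg]; simp [mul_assoc]
      rw [sub_eq_neg_add, sub_eq_neg_add, zpow_add, zpow_add, zpow_neg, zpow_neg, h1]
      simp [mul_assoc]
    rw [hb0] at key
    simp only [zpow_zero] at key
    have happ := key_u (a n1 - a n0) 0
    rw [key] at happ
    have h0 : (1 : Z ≃ᵢ Z) (ρu 0) = ρu 0 := rfl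
    rw [h0] at happ
    have := hρu.injective happ
    have h2 : ((a n1 - a n0 : ℤ) : ℝ) * cu = 0 := by linarith [this]
    have h3 : ((a n1 - a n0 : ℤ) : ℝ) = 0 := by
      rcases mul_eq_zero.1 h2 with h | h
      · exact h
      · exact absurd h hcu.ne'
    have : a n1 - a n0 = 0 := by exact_mod_cast h3
    exact sub_ne_zero.2 hane this
  · -- u ^ (a n1 - a n0) = v ^ (b n1 - b n0)
    have h1 : u ^ a n1 = u ^ a n0 * (v ^ b n0)⁻¹ * v ^ b n1 := by
      rw [← heqg]; simp [mul_assoc]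
    rw [sub_eq_neg_add, sub_eq_neg_add, zpow_add, zpow_add, zpow_neg, zpow_neg, h1]
    simp [mul_assoc]
end
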